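/- arXiv:1202.5233 — 3 statements merged into one kernel-verified Lean document; each statement's English description precedes it below -/
import Mathlib

section
/- Appending one character to a word changes its Lempel-Ziv factorization in exactly one of two ways: if X has LZ factorization f_1,...,f_i then Xa has LZ factorization either f_1,...,f_{i-1},(f_i·a) or f_1,...,f_i,f_{i+1} where f_{i+1} = a. -/
/-- `X` occurs in `W` starting at 0-based position `p` (1-based position `p+1`). -/
def OccursAt {α : Type*} (X W : List α) (p : ℕ) : Prop :=
  (W.drop p).take X.length = X

/-- `X` occurs in `W` starting at some 1-based position `≤ ℓ`,
    i.e. at a 0-based position `< ℓ`. -/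
def OccursBefore {α : Type*} (X W : List α) (ℓ : ℕ) : Prop :=
  ∃ p < ℓ, OccursAt X W p

/-- `fs` is the Lempel-Ziv factorization of `W`. -/
def IsLZFact {α : Type*} (W : List α) (fs : List (List α)) : Prop :=
  fs.flatten = W ∧ (∀ f ∈ fs, f ≠ []) ∧
  ∀ i : Fin fs.length,
    ((fs.get i).length = 1 ∧
        ¬ OccursBefore (fs.get i) W ((fs.take i).flatten).length) ∨
    (OccursBefore (fs.get i) W ((fs.take i).flatten).length ∧
      ∀ s ≤ W.length - ((fs.take i).flatten).length,
        OccursBefore ((W.drop ((fs.take i).flatten).length).take s) W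
            ((fs.take i).flatten).length →
        s ≤ (fs.get i).length)

namespace LZaux
variable {α : Type*}

lemma occursAt_length {Y W : List α} {p : ℕ} (h : OccursAt Y W p) :
    Y.length ≤ W.length - p := by
  have := congrArg List.length h
  simp [List.length_take, List.length_drop] at this
  omega

lemma occursAt_take {Y W : List α} {p m : ℕ} (h : OccursAt Y W p) (hm : m ≤ Y.length) :
    OccursAt (Y.take m) W p := by
  unfold OccursAt at *
  rw [List.length_take, Nat.min_eq_left hm, ← h, List.take_take, Nat.min_eq_left hm]

lemma occursAt_append_iff {Y X : List α} {a : α} {p : ℕ} (hp : p + Y.length ≤ X.length) :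
    OccursAt Y (X ++ [a]) p ↔ OccursAt Y X p := by
  unfold OccursAt
  rw [List.drop_append_of_le_length (by omega),
    List.take_append_of_le_length (by rw [List.length_drop]; omega)]

lemma occursBefore_append_iff {Y X : List α} {a : α} {ℓ : ℕ} (hl : ℓ + Y.length ≤ X.length) :
    OccursBefore Y (X ++ [a]) ℓ ↔ OccursBefore Y X ℓ := by
  constructor <;> rintro ⟨p, hp, hocc⟩
  · exact ⟨p, hp, (occursAt_append_iff (by omega)).mp hocc⟩
  · exact ⟨p, hp, (occursAt_append_iff (by omega)).mpr hocc⟩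

lemma occursBefore_take {Y W : List α} {ℓ m : ℕ} (h : OccursBefore Y W ℓ) (hm : m ≤ Y.length) :
    OccursBefore (Y.take m) W ℓ := by
  obtain ⟨p, hp, hocc⟩ := h
  exact ⟨p, hp, occursAt_take hocc hm⟩

lemma prefix_flatten_length {l₁ l₂ : List (List α)} (h : l₁ <+: l₂) :
    l₁.flatten.length ≤ l₂.flatten.length := by
  obtain ⟨t, rfl⟩ := h
  simp

lemma flatten_take_le (fs : List (List α)) {j k : ℕ} (h : j ≤ k) :
    (fs.take j).flatten.length ≤ (fs.take k).flatten.length := by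
  have h2 : fs.take j = (fs.take k).take j := by rw [List.take_take, Nat.min_eq_left h]
  rw [h2]
  exact prefix_flatten_length (List.take_prefix _ _)

lemma flatten_take_succ (fs : List (List α)) {i : ℕ} (hi : i < fs.length) :
    (fs.take (i+1)).flatten.length = (fs.take i).flatten.length + fs[i].length := by
  rw [← List.take_concat_get (l := fs) (i := i) hi, List.concat_eq_append, List.flatten_append,
    List.length_append, List.flatten_cons, List.flatten_nil, List.append_nil]

lemma drop_flatten (fs : List (List α)) {i : ℕ} (hi : i < fs.length) :
    fs.flatten.drop ((fs.take i).flatten.length) = fs[i] ++ (fs.drop (i+1)).flatten := by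
  have h1 : fs.flatten = (fs.take i).flatten ++ (fs.drop i).flatten := by
    rw [← List.flatten_append, List.take_append_drop]
  rw [h1, List.drop_left, List.drop_eq_getElem_cons hi, List.flatten_cons]

/-- The condition that a single factor `f` at start position `ℓ` in `W` must satisfy. -/
def Cond (W f : List α) (ℓ : ℕ) : Prop :=
  (f.length = 1 ∧ ¬ OccursBefore f W ℓ) ∨
  (OccursBefore f W ℓ ∧ ∀ s ≤ W.length - ℓ, OccursBefore ((W.drop ℓ).take s) W ℓ → s ≤ f.length)

/-- Transport of the factor condition along appending a character, for factors strictly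
    before the end. -/
lemma cond_append {W f : List α} {a : α} {ℓ : ℕ} (hl : ℓ + f.length + 1 ≤ W.length)
    (h : Cond W f ℓ) : Cond (W ++ [a]) f ℓ := by
  rcases h with ⟨h1, h2⟩ | ⟨h1, h2⟩
  · exact Or.inl ⟨h1, fun hc => h2 ((occursBefore_append_iff (by omega)).mp hc)⟩
  · refine Or.inr ⟨(occursBefore_append_iff (by omega)).mpr h1, ?_⟩
    intro s hs hocc
    by_contra hgt
    push_neg at hgt
    set s' := f.length + 1 with hs'
    have hs'len : s' ≤ (((W ++ [a]).drop ℓ).take s).length := by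
      simp only [List.length_take, List.length_drop, List.length_append, List.length_cons,
        List.length_nil]
      omega
    have hocc' := occursBefore_take hocc hs'len
    rw [List.take_take, Nat.min_eq_left (by omega : s' ≤ s)] at hocc'
    rw [List.drop_append_of_le_length (by omega),
        List.take_append_of_le_length (by rw [List.length_drop]; omega)] at hocc'
    have hlen2 : ((W.drop ℓ).take s').length = s' := by
      simp only [List.length_take, List.length_drop]
      omega
    have h3 := (occursBefore_append_iff (by rw [hlen2]; omega)).mp hocc'
    have := h2 s' (by omega) h3
    omega



lemma isLZFact_iff (W : List α) (fs : List (List α)) :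
    IsLZFact W fs ↔ fs.flatten = W ∧ (∀ f ∈ fs, f ≠ []) ∧
      ∀ i : Fin fs.length, Cond W (fs.get i) ((fs.take i).flatten.length) := Iff.rfl

end LZaux

open LZaux in
/-- Appending one character changes the LZ factorization in exactly one of two
    ways: either the last factor absorbs the new character, or the new
    character becomes a new one-character factor. -/
theorem lz_append_char {α : Type*} (X : List α) (a : α) (fs : List (List α))
    (h : IsLZFact X fs) :
    Xor'
      (∃ hne : fs ≠ [],
        IsLZFact (X ++ [a]) (fs.dropLast ++ [fs.getLast hne ++ [a]]))
      (IsLZFact (X ++ [a]) (fs ++ [[a]])) := by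
  rw [isLZFact_iff] at h
  obtain ⟨hX, hnonempty, hcond⟩ := h
  rcases eq_or_ne fs [] with rfl | hne
  · -- empty case: X = []
    simp only [List.flatten_nil] at hX
    subst hX
    refine Or.inr ⟨?_, ?_⟩
    · rw [isLZFact_iff]
      refine ⟨by simp, by simp, ?_⟩
      intro i
      have hilt := i.isLt
      simp only [List.nil_append, List.length_cons, List.length_nil] at hilt
      have hi0 : (i : ℕ) = 0 := by omega
      left
      constructor
      · simp [List.get_eq_getElem, hi0]
      · rintro ⟨p, hp, -⟩
        simp [hi0] at hp
    · rintro ⟨hne', -⟩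
      exact hne' rfl
  · -- main case: fs ≠ []
    have hz : 0 < fs.length := List.length_pos_iff.mpr hne
    set z := fs.length with hzdef
    set ℓ := (fs.take (z-1)).flatten.length with hldef
    set f := fs.getLast hne with hfdef
    have hfget : f = fs[z-1]'(by omega) := List.getLast_eq_getElem hne
    have hfne : f ≠ [] := hnonempty f (List.getLast_mem hne)
    have hf1 : 1 ≤ f.length := List.length_pos_iff.mpr hfne
    have hlen : ℓ + f.length = X.length := by
      have h1 := flatten_take_succ fs (show z-1 < z by omega)
      rw [show z-1+1 = z by omega, List.take_length] at h1
      rw [hldef, hfget, ← hX]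
      omega
    have hdrop : X.drop ℓ = f := by
      have h1 := drop_flatten fs (show z-1 < z by omega)
      rw [show z-1+1 = z by omega, List.drop_length, List.flatten_nil,
        List.append_nil] at h1
      rw [← hX, h1, hfget]
    have hdrop' : (X ++ [a]).drop ℓ = f ++ [a] := by
      rw [List.drop_append_of_le_length (by omega), hdrop]
    -- the new-word condition holds for every factor strictly before the last one
    have condAll : ∀ j, (hj : j < z - 1) →
        Cond (X ++ [a]) (fs[j]'(by omega)) ((fs.take j).flatten.length) := by
      intro j hj
      have hold := hcond ⟨j, by omega⟩
      simp only [List.get_eq_getElem] at hold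
      refine cond_append ?_ hold
      have h1 := flatten_take_succ fs (show j < z by omega)
      have h2 := flatten_take_le fs (show j + 1 ≤ z - 1 by omega)
      omega
    have condNewChar : Cond (X ++ [a]) [a] X.length := by
      by_cases hb : OccursBefore [a] (X ++ [a]) X.length
      · refine Or.inr ⟨hb, ?_⟩
        intro s hs _
        simp only [List.length_append, List.length_cons, List.length_nil] at hs ⊢
        omega
      · exact Or.inl ⟨rfl, hb⟩
    by_cases hA : OccursBefore (f ++ [a]) (X ++ [a]) ℓ
    · -- case A : the last factor absorbs `a`
      refine Or.inl ⟨⟨hne, ?_⟩, ?_⟩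
      · -- IsLZFact (X ++ [a]) (fs.dropLast ++ [f ++ [a]])
        rw [isLZFact_iff]
        refine ⟨?_, ?_, ?_⟩
        · have hsplit : fs.dropLast.flatten ++ f = X := by
            conv_rhs => rw [← hX, ← List.dropLast_append_getLast hne]
            rw [List.flatten_append, List.flatten_cons, List.flatten_nil, List.append_nil]
          rw [List.flatten_append, List.flatten_cons, List.flatten_nil, List.append_nil,
            ← List.append_assoc, hsplit]
        · intro g hg
          rcases List.mem_append.mp hg with hg | hg
          · exact hnonempty g (List.mem_of_mem_dropLast hg)
          · simp only [List.mem_singleton] at hg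
            subst hg
            simp
        · intro i
          obtain ⟨j, hj0⟩ := i
          simp only [List.length_append, List.length_dropLast, List.length_cons,
            List.length_nil] at hj0
          simp only [List.get_eq_getElem, Fin.val_mk]
          have htake : (fs.dropLast ++ [f ++ [a]]).take j = fs.dropLast.take j :=
            List.take_append_of_le_length (by rw [List.length_dropLast]; omega)
          rcases Nat.lt_or_ge j (z-1) with hj | hj
          · have hget : (fs.dropLast ++ [f ++ [a]])[j]'(by
                simp only [List.length_append, List.length_dropLast, List.length_cons,
                  List.length_nil]; omega) = fs[j]'(by omega) := by
              rw [List.getElem_append_left (by rw [List.length_dropLast]; omega)]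
              exact List.getElem_dropLast (xs := fs) (i := j) (by rw [List.length_dropLast]; omega)
            have htake2 : fs.dropLast.take j = fs.take j := by
              rw [List.dropLast_eq_take, List.take_take, Nat.min_eq_left (by omega)]
            have hc := condAll j hj
            rw [← htake2, ← htake] at hc
            rw [hget]
            exact hc
          · have hj' : j = z - 1 := by omega
            subst hj'
            have hget : (fs.dropLast ++ [f ++ [a]])[z-1]'(by
                simp only [List.length_append, List.length_dropLast, List.length_cons,
                  List.length_nil]; omega) = f ++ [a] := by
              rw [List.getElem_append_right (by rw [List.length_dropLast])]
              simp [List.length_dropLast]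
            have htake2 : fs.dropLast.take (z-1) = fs.take (z-1) := by
              rw [List.dropLast_eq_take, List.take_take, Nat.min_self]
            rw [hget, htake, htake2]
            refine Or.inr ⟨hA, ?_⟩
            intro s hs _
            simp only [List.length_append, List.length_cons, List.length_nil] at hs ⊢
            omega
      · -- refute the second alternative
        intro hQ
        rw [isLZFact_iff] at hQ
        have hc := hQ.2.2 ⟨z-1, (by
          simp only [List.length_append, List.length_cons, List.length_nil]; omega)⟩
        simp only [List.get_eq_getElem, Fin.val_mk] at hc
        have hget : (fs ++ [[a]])[z-1]'(by
            simp only [List.length_append, List.length_cons, List.length_nil]; omega) = f := by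
          rw [List.getElem_append_left (by omega), ← hfget]
        have htake : ((fs ++ [[a]]).take (z-1)) = fs.take (z-1) :=
          List.take_append_of_le_length (by omega)
        rw [hget, htake] at hc
        rcases hc with ⟨-, h2⟩ | ⟨-, h2⟩
        · have hocc := occursBefore_take hA (show f.length ≤ (f ++ [a]).length by simp)
          rw [List.take_left] at hocc
          exact h2 hocc
        · have hocc : OccursBefore (((X ++ [a]).drop ℓ).take (f.length + 1)) (X ++ [a]) ℓ := by
            rw [hdrop', List.take_of_length_le (by simp)]
            exact hA
          have := h2 (f.length + 1) (by
            simp only [List.length_append, List.length_cons, List.length_nil]; omega) hocc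
          omega
    · -- case B : `a` becomes a new one-character factor
      have condLast : Cond (X ++ [a]) f ℓ := by
        have hold := hcond ⟨z-1, by omega⟩
        simp only [List.get_eq_getElem, Fin.val_mk] at hold
        rw [← hfget] at hold
        rcases hold with ⟨h1, h2⟩ | ⟨h1, h2⟩
        · exact Or.inl ⟨h1, fun hc => h2 ((occursBefore_append_iff (by omega)).mp hc)⟩
        · refine Or.inr ⟨(occursBefore_append_iff (by omega)).mpr h1, ?_⟩
          intro s hs hocc
          by_contra hgt
          push_neg at hgt
          have hslen : s = f.length + 1 := by
            simp only [List.length_append, List.length_cons, List.length_nil] at hs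
            omega
          rw [hdrop', hslen, List.take_of_length_le (by simp)] at hocc
          exact hA hocc
      refine Or.inr ⟨?_, ?_⟩
      · rw [isLZFact_iff]
        refine ⟨by simp [hX], ?_, ?_⟩
        · intro g hg
          rcases List.mem_append.mp hg with hg | hg
          · exact hnonempty g hg
          · simp only [List.mem_singleton] at hg
            subst hg
            simp
        · intro i
          obtain ⟨j, hj0⟩ := i
          simp only [List.length_append, List.length_cons, List.length_nil] at hj0
          simp only [List.get_eq_getElem, Fin.val_mk]
          have htake : (fs ++ [[a]]).take j = fs.take j :=
            List.take_append_of_le_length (by omega)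
          rw [htake]
          rcases Nat.lt_or_ge j (z-1) with hj | hj
          · have hget : (fs ++ [[a]])[j]'(by
                simp only [List.length_append, List.length_cons, List.length_nil];
                  omega) = fs[j]'(by omega) :=
              List.getElem_append_left (by omega)
            rw [hget]
            exact condAll j hj
          · rcases Nat.lt_or_ge j z with hj2 | hj2
            · have hj' : j = z - 1 := by omega
              subst hj'
              have hget : (fs ++ [[a]])[z-1]'(by
                  simp only [List.length_append, List.length_cons, List.length_nil];
                    omega) = f := by
                rw [List.getElem_append_left (by omega), ← hfget]
              rw [hget]
              exact condLast
            · have hj' : j = z := by omega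
              subst hj'
              have hget : (fs ++ [[a]])[z]'(by
                  simp only [List.length_append, List.length_cons, List.length_nil];
                    omega) = [a] := by
                rw [List.getElem_append_right (by omega)]
                simp
              have htake2 : (fs.take z).flatten.length = X.length := by
                rw [List.take_length, hX]
              rw [hget, htake2]
              exact condNewChar
      · -- refute the first alternative
        rintro ⟨hne', hP⟩
        rw [isLZFact_iff] at hP
        have hc := hP.2.2 ⟨z-1, (by
          simp only [List.length_append, List.length_dropLast, List.length_cons,
            List.length_nil]; omega)⟩
        simp only [List.get_eq_getElem, Fin.val_mk] at hc
        have hlast' : fs.getLast hne' = f := rfl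
        have hget : (fs.dropLast ++ [fs.getLast hne' ++ [a]])[z-1]'(by
            simp only [List.length_append, List.length_dropLast, List.length_cons,
              List.length_nil]; omega) = f ++ [a] := by
          rw [List.getElem_append_right (by rw [List.length_dropLast])]
          simp [List.length_dropLast, hlast']
        have htake : ((fs.dropLast ++ [fs.getLast hne' ++ [a]]).take (z-1)) = fs.take (z-1) := by
          rw [List.take_append_of_le_length (by rw [List.length_dropLast]),
            List.dropLast_eq_take, List.take_take, Nat.min_self]
        rw [hget, htake] at hc
        rcases hc with ⟨h1, -⟩ | ⟨h1, -⟩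
        · simp only [List.length_append, List.length_cons, List.length_nil] at h1
          omega
        · exact hA h1
end

section
/- Let W' be the meta-word of W (blocks of r characters) and suppose W'[ℓ'+1..s-1] occurs in W' starting at some position ≤ ℓ', where ℓ' = ⌊ℓ/r⌋ and ℓ is the total length of the LZ factors f_1,...,f_{i-1} of W. Then W[ℓ+1..(s-1)r] occurs in W starting at a position ≤ ℓ, and hence |f_i| ≥ (s-1)r - ℓ. -/
/-- The meta-word of `W` with block size `r`: the word over the alphabet of
    `r`-tuples whose `j`-th character is the `j`-th block of `r` characters of
    `W`. -/
def metaWord {α : Type*} (r : ℕ) (W : List α) : List (List α) :=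
  (List.range (W.length / r)).map fun j => (W.drop (j * r)).take r

/-- If `W'[ℓ'+1..s-1]` occurs in the meta-word `W'` starting at a (1-based)
    position `≤ ℓ'` (0-based position `q < ℓ'`), where `ℓ' = ⌊ℓ/r⌋` and `ℓ` is
    the total length of the LZ factors `f_1,…,f_{i-1}`, then `W[ℓ+1..(s-1)r]`
    occurs in `W` starting at a position `≤ ℓ`, and hence
    `|f_i| ≥ (s-1)r - ℓ`. -/
theorem lz_meta_occurrence {α : Type*} (W : List α) (fs : List (List α))
    (h : IsLZFact W fs) (i : Fin fs.length) (r ℓ ℓ' s q : ℕ)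
    (hℓ : ℓ = ((fs.take i).flatten).length) (hℓ' : ℓ' = ℓ / r)
    (hr : 1 ≤ r) (hs : ℓ' + 2 ≤ s) (hsW : (s - 1) * r ≤ W.length)
    (hq : q < ℓ')
    (hocc : OccursAt (((metaWord r W).drop ℓ').take (s - 1 - ℓ'))
      (metaWord r W) q) :
    OccursBefore ((W.drop ℓ).take ((s - 1) * r - ℓ)) W ℓ ∧
      (s - 1) * r - ℓ ≤ (fs.get i).length := by
  obtain ⟨hflat, hne, hfac⟩ := h
  set M := metaWord r W with hM
  have hMlen : M.length = W.length / r := by simp [hM, metaWord]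
  set d := ℓ % r with hdd
  have hdr : d < r := Nat.mod_lt _ (by omega)
  have hdm : ℓ' * r + d = ℓ := by
    rw [hℓ', hdd, Nat.mul_comm]; exact Nat.div_add_mod ℓ r
  set m := s - 1 - ℓ' with hmm
  have hm : ℓ' + m = s - 1 := by omega
  have hs1M : s - 1 ≤ W.length / r := (Nat.le_div_iff_mul_le (by omega)).mpr hsW
  -- structure of W around position ℓ
  have hWsplit : W = (fs.take i).flatten ++ (fs.get i ++ (fs.drop (i+1)).flatten) := by
    conv_lhs => rw [← hflat, ← List.take_append_drop i fs]
    rw [List.flatten_append, List.drop_eq_getElem_cons i.isLt, List.flatten_cons,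
      List.get_eq_getElem]
  have hdropℓ : W.drop ℓ = fs.get i ++ (fs.drop (i+1)).flatten := by
    rw [hℓ, hWsplit]
    exact List.drop_left
  have hℓW : ℓ ≤ W.length := by
    have := congrArg List.length hWsplit
    simp only [List.length_append] at this
    omega
  have hfi : (W.drop ℓ).take (fs.get i).length = fs.get i := by
    rw [hdropℓ]; exact List.take_left
  -- the occurrence, at the meta level
  have hXlen : (((M.drop ℓ').take (s - 1 - ℓ'))).length = m := by
    simp only [List.length_take, List.length_drop, hMlen]
    omega
  have hocc' : (M.drop q).take m = (M.drop ℓ').take m := by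
    have h0 : (M.drop q).take ((((M.drop ℓ').take (s - 1 - ℓ'))).length)
        = (M.drop ℓ').take (s - 1 - ℓ') := hocc
    rw [hXlen] at h0
    rw [h0]
  have hmeta : ∀ j, j < m → M[q+j]? = M[ℓ'+j]? := by
    intro j hj
    have := congrArg (fun l => l[j]?) hocc'
    simpa [List.getElem?_take, List.getElem?_drop, hj] using this
  have hMk : ∀ k, k < W.length / r → M[k]? = some ((W.drop (k*r)).take r) := by
    intro k hk
    simp [hM, metaWord, List.getElem?_map, List.getElem?_range hk]
  -- byte-level equality
  have hbyte : ∀ u, u < m * r → W[q*r+u]? = W[ℓ'*r+u]? := by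
    intro u hu
    set j := u / r with hj'
    set v := u % r with hv'
    have hv : v < r := Nat.mod_lt _ (by omega)
    have hjr : j * r + v = u := by rw [hj', hv', Nat.mul_comm]; exact Nat.div_add_mod u r
    have hj : j < m := (Nat.div_lt_iff_lt_mul (by omega)).mpr hu
    have h1' : q + j < W.length / r := lt_of_lt_of_le (by omega) hs1M
    have h2' : ℓ' + j < W.length / r := lt_of_lt_of_le (by omega) hs1M
    have hblock : ((W.drop ((q+j)*r)).take r) = ((W.drop ((ℓ'+j)*r)).take r) := by
      have e := hmeta j hj
      rw [hMk _ h1', hMk _ h2'] at e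
      exact Option.some.inj e
    have e2 := congrArg (fun l => l[v]?) hblock
    simp only [List.getElem?_take, List.getElem?_drop, hv, if_pos] at e2
    have eq1 : (q+j)*r + v = q*r + u := by rw [Nat.add_mul]; omega
    have eq2 : (ℓ'+j)*r + v = ℓ'*r + u := by rw [Nat.add_mul]; omega
    rwa [eq1, eq2] at e2
  set K := (s - 1) * r - ℓ with hK
  have hKmr : d + K = m * r := by
    have h1 : (s - 1) * r = ℓ' * r + m * r := by rw [← Nat.add_mul, hm]
    have h2 : r ≤ m * r := Nat.le_mul_of_pos_left r (by omega)
    omega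
  set p := q * r + d with hp'
  have hpℓ : p < ℓ := by
    have h1 : (q+1) * r ≤ ℓ' * r := Nat.mul_le_mul_right r hq
    have h2 : (q+1) * r = q * r + r := by ring
    omega
  have hTake : (W.drop p).take K = (W.drop ℓ).take K := by
    apply List.ext_getElem?
    intro t
    by_cases ht : t < K
    · simp only [List.getElem?_take, List.getElem?_drop, ht, if_pos]
      have e1 : p + t = q*r + (d + t) := by omega
      have e2 : ℓ + t = ℓ'*r + (d + t) := by omega
      rw [e1, e2]
      exact hbyte (d+t) (by omega)
    · simp [List.getElem?_take, ht]
  have hBlen : ((W.drop ℓ).take K).length = K := by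
    simp only [List.length_take, List.length_drop]
    omega
  have hoccB : OccursAt ((W.drop ℓ).take K) W p := by
    unfold OccursAt
    rw [hBlen, hTake]
  constructor
  · exact ⟨p, hpℓ, hoccB⟩
  · rcases hfac i with ⟨hlen1, hnocc⟩ | ⟨_, hmax⟩
    · by_cases hK0 : K = 0
      · omega
      · exfalso
        apply hnocc
        rw [← hℓ]
        refine ⟨p, hpℓ, ?_⟩
        unfold OccursAt
        rw [hlen1]
        have h3 := congrArg (List.take 1) hTake
        rw [List.take_take, List.take_take, Nat.min_eq_left (by omega)] at h3
        rw [h3]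
        have h4 := hfi
        rw [hlen1] at h4
        exact h4
    · apply hmax
      · rw [← hℓ]; omega
      · rw [← hℓ]
        exact ⟨p, hpℓ, hoccB⟩
end

section
/- First-step bound: with notation as in the paper, if s is minimal such that W'[ℓ'+1..s] is represented by a leaf of the implicit suffix tree of W'[1..s], then (s-1)r - ℓ ≤ |f_i|, and therefore the number of characters of W read during the first step, sr - ℓ, is at most |f_i| + r. -/
/-- `X` is represented by a leaf of the implicit suffix tree of `V`: `X` is a
    nonempty suffix of `V` whose only occurrence in `V` is the suffix
    occurrence. -/
def RepLeaf {β : Type*} (V X : List β) : Prop :=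
  X ≠ [] ∧ X <:+ V ∧ ∀ p, OccursAt X V p → p = V.length - X.length

/-- `X` is represented by an inner (possibly implicit) vertex of the implicit
    suffix tree of `V`: `X` occurs at least twice in `V`, or `X` is a proper
    prefix of a longer occurrence (its occurrence extends to the right). -/
def RepInner {β : Type*} (V X : List β) : Prop :=
  (∃ p q, p ≠ q ∧ OccursAt X V p ∧ OccursAt X V q) ∨
    (∃ p, OccursAt X V p ∧ p + X.length < V.length)

lemma blocks_concat_eq {α : Type*} (W : List α) (r p q m : ℕ) (hr : 1 ≤ r)
    (hpm : (p + m) * r ≤ W.length) (hqm : (q + m) * r ≤ W.length)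
    (hblk : ∀ u, u < m → (W.drop ((p + u) * r)).take r = (W.drop ((q + u) * r)).take r) :
    (W.drop (p * r)).take (m * r) = (W.drop (q * r)).take (m * r) := by
  rw [add_mul] at hpm hqm
  apply List.ext_getElem
  · simp only [List.length_take, List.length_drop]
    omega
  · intro t h1 h2
    rw [List.getElem_take, List.getElem_drop, List.getElem_take, List.getElem_drop]
    have ht : t < m * r := by
      simp only [List.length_take, List.length_drop] at h1; omega
    have hv : t % r < r := Nat.mod_lt _ hr
    have hu : t / r < m := Nat.div_lt_of_lt_mul (by rwa [mul_comm])
    have hb := congrArg (fun l => l[t % r]?) (hblk (t / r) hu)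
    simp only [List.getElem?_take, hv, if_pos, List.getElem?_drop] at hb
    have hur : (t / r) * r + t % r = t := by
      rw [mul_comm]; exact Nat.div_add_mod t r
    have e1 : (p + t / r) * r + t % r = p * r + t := by rw [add_mul]; omega
    have e2 : (q + t / r) * r + t % r = q * r + t := by rw [add_mul]; omega
    rw [e1, e2] at hb
    have hp' : p * r + t < W.length := by
      have : (t / r) * r + r ≤ m * r := by
        have := Nat.succ_le_of_lt hu
        calc (t/r)*r + r = (t/r + 1)*r := by ring
        _ ≤ m * r := Nat.mul_le_mul_right _ this
      omega
    have hq' : q * r + t < W.length := by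
      have : (t / r) * r + r ≤ m * r := by
        have := Nat.succ_le_of_lt hu
        calc (t/r)*r + r = (t/r + 1)*r := by ring
        _ ≤ m * r := Nat.mul_le_mul_right _ this
      omega
    rw [List.getElem?_eq_getElem hp', List.getElem?_eq_getElem hq'] at hb
    exact Option.some.inj hb

/-- First-step bound: if `s` is minimal such that `W'[ℓ'+1..s]` is represented
    by a leaf of the implicit suffix tree of `W'[1..s]` (`W'` being the
    meta-word of `W`, `ℓ` the total length of the LZ factors `f_1,…,f_{i-1}`,
    `ℓ' = ⌊ℓ/r⌋` and `|f_i| ≥ r`), then `(s-1)r - ℓ ≤ |f_i|`, and therefore the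
    number `sr - ℓ` of characters of `W` read during the first step is at most
    `|f_i| + r`. (Stated without truncated subtraction.) -/
theorem lz_first_step_bound {α : Type*} (W : List α) (fs : List (List α))
    (h : IsLZFact W fs) (i : Fin fs.length) (r ℓ ℓ' s : ℕ)
    (hℓ : ℓ = ((fs.take i).flatten).length) (hℓ' : ℓ' = ℓ / r)
    (hr : 1 ≤ r) (hfi : r ≤ (fs.get i).length)
    (hs : ℓ' < s) (hsW : s ≤ (metaWord r W).length)
    (hleaf : RepLeaf ((metaWord r W).take s)
      (((metaWord r W).drop ℓ').take (s - ℓ')))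
    (hmin : ∀ s', ℓ' < s' → s' < s →
      ¬ RepLeaf ((metaWord r W).take s')
          (((metaWord r W).drop ℓ').take (s' - ℓ'))) :
    (s - 1) * r ≤ (fs.get i).length + ℓ ∧
      s * r ≤ (fs.get i).length + r + ℓ := by
  obtain ⟨hflat, hne, hfact⟩ := h
  set fi := fs.get i with hfidef
  set W' := metaWord r W with hW'def
  have nW' : W'.length = W.length / r := by simp [hW'def, metaWord]
  -- structure of W around ℓ
  have hWsplit : W = (fs.take i).flatten ++ (fs.drop i).flatten := by
    rw [← List.flatten_append, List.take_append_drop, hflat]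
  have hdropi : fs.drop (i : ℕ) = fi :: fs.drop ((i : ℕ) + 1) :=
    List.drop_eq_getElem_cons i.isLt
  have hdrop : W.drop ℓ = fi ++ (fs.drop ((i : ℕ) + 1)).flatten := by
    rw [hℓ]; conv_lhs => rw [hWsplit]
    rw [List.drop_left, hdropi, List.flatten_cons]
  have hWlen : W.length = ℓ + fi.length + ((fs.drop ((i:ℕ)+1)).flatten).length := by
    conv_lhs => rw [hWsplit]
    rw [List.length_append, hdropi, List.flatten_cons, List.length_append, hℓ]; ring
  have htake : (W.drop ℓ).take fi.length = fi := by
    rw [hdrop]; exact List.take_left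
  have hℓ'r : ℓ' * r ≤ ℓ := by rw [hℓ']; exact Nat.div_mul_le_self _ _
  have hℓ'r2 : ℓ < (ℓ' + 1) * r := by
    have h1 := Nat.div_add_mod ℓ r
    have h2 : ℓ % r < r := Nat.mod_lt _ (by omega)
    rw [hℓ', add_mul, one_mul, mul_comm]; omega
  -- key claim
  have key : (s - 1) * r ≤ fi.length + ℓ := by
    by_cases hsl : s = ℓ' + 1
    · subst hsl; simpa using hℓ'r.trans (Nat.le_add_left _ _)
    · -- s ≥ ℓ' + 2
      have hs2 : ℓ' + 2 ≤ s := by omega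
      by_cases hcase : (s - 1) * r ≤ ℓ
      · omega
      push_neg at hcase
      set s' := s - 1 with hs'def
      set m := s' - ℓ' with hmdef
      have hm1 : 1 ≤ m := by omega
      have hs'W : s' ≤ W'.length := by omega
      have hnl := hmin s' (by omega) (by omega)
      set X' : List (List α) := (W'.drop ℓ').take m with hX'def
      have lenX' : X'.length = m := by
        rw [hX'def]; simp only [List.length_take, List.length_drop]; omega
      have hXne : X' ≠ [] := by
        intro hc; rw [hc] at lenX'; simp at lenX'; omega
      have hdt : (W'.take s').drop ℓ' = X' := by rw [List.drop_take]
      have hsuf : X' <:+ W'.take s' := hdt ▸ List.drop_suffix _ _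
      rw [RepLeaf, not_and_or, not_and_or] at hnl
      have hex : ∃ p, OccursAt X' (W'.take s') p ∧ p ≠ (W'.take s').length - X'.length := by
        rcases hnl with h1 | h2 | h3
        · exact (h1 hXne).elim
        · exact (h2 hsuf).elim
        · push_neg at h3; exact h3
      obtain ⟨p, hop, hpne⟩ := hex
      rw [OccursAt, lenX'] at hop
      have hlents' : (W'.take s').length = s' := by
        simp only [List.length_take]; omega
      have hpne' : p ≠ ℓ' := by rw [hlents', lenX'] at hpne; omega
      -- p + m ≤ s'
      have hopl := congrArg List.length hop
      simp only [List.length_take, List.length_drop, lenX', hlents'] at hopl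
      have hpm : p + m ≤ s' := by omega
      have hpl : p < ℓ' := by omega
      -- occurrence in W'
      have hoccW' : (W'.drop p).take m = (W'.drop ℓ').take m := by
        have h1 := hop
        rw [List.drop_take, List.take_take, min_eq_left (by omega)] at h1
        rw [h1, hX'def]
      -- block equalities
      have hblk : ∀ u, u < m → (W.drop ((p + u) * r)).take r = (W.drop ((ℓ' + u) * r)).take r := by
        intro u hu
        have hgu := congrArg (fun l => l[u]?) hoccW'
        simp only [List.getElem?_take, hu, if_pos, List.getElem?_drop] at hgu
        have hmeta : ∀ j, j < W'.length → W'[j]? = some ((W.drop (j * r)).take r) := by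
          intro j hj
          rw [nW'] at hj
          simp [hW'def, metaWord, List.getElem?_map, List.getElem?_range, hj]
        rw [hmeta (p + u) (by omega), hmeta (ℓ' + u) (by omega)] at hgu
        exact Option.some.inj hgu
      have hrle : ∀ a : ℕ, a ≤ W.length / r → a * r ≤ W.length := by
        intro a ha
        calc a * r ≤ (W.length / r) * r := Nat.mul_le_mul_right _ ha
        _ ≤ W.length := Nat.div_mul_le_self _ _
      have hWblocks : (W.drop (p * r)).take (m * r) = (W.drop (ℓ' * r)).take (m * r) :=
        blocks_concat_eq W r p ℓ' m hr (hrle _ (by omega)) (hrle _ (by omega)) hblk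
      -- translate to the unaligned occurrence
      set d := ℓ - ℓ' * r with hddef
      set k := s' * r - ℓ with hkdef
      have hs'r : s' * r = ℓ' * r + m * r := by rw [← add_mul]; congr 1; omega
      have hdk : d + k = m * r := by omega
      have hs'rW : s' * r ≤ W.length := hrle _ (by omega)
      have hWocc : (W.drop (p * r + d)).take k = (W.drop ℓ).take k := by
        have := congrArg (fun l => l.drop d) hWblocks
        simp only [List.drop_take, List.drop_drop] at this
        have e : m * r - d = k := by omega
        rw [e] at this
        have e3 : ℓ' * r + d = ℓ := by omega
        rw [e3] at this
        exact this
      have hYlen : ((W.drop ℓ).take k).length = k := by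
        simp only [List.length_take, List.length_drop]; omega
      have hpos : p * r + d < ℓ := by
        have : (p + 1) * r ≤ ℓ' * r := Nat.mul_le_mul_right _ (by omega)
        rw [add_mul, one_mul] at this
        omega
      have hOB : OccursBefore ((W.drop ℓ).take k) W ℓ :=
        ⟨p * r + d, hpos, by rw [OccursAt, hYlen]; exact hWocc⟩
      -- apply the LZ maximality
      rcases hfact i with ⟨hlen1, hnocc⟩ | ⟨_, hmax⟩
      · exfalso
        rw [← hℓ] at hnocc
        apply hnocc
        obtain ⟨p0, hp0, hocc0⟩ := hOB
        refine ⟨p0, hp0, ?_⟩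
        rw [OccursAt, ← hfidef, hlen1]
        rw [OccursAt, hYlen] at hocc0
        have : ((W.drop p0).take k).take 1 = ((W.drop ℓ).take k).take 1 := by rw [hocc0]
        rw [List.take_take, List.take_take, min_eq_left (by omega)] at this
        rw [this, ← hlen1, ← hfidef, htake]
      · rw [← hℓ] at hmax
        have := hmax k (by omega) hOB
        rw [← hfidef] at this
        omega
  constructor
  · exact key
  · have hsr : s * r = (s - 1) * r + r := by
      obtain ⟨t, rfl⟩ : ∃ t, s = t + 1 := ⟨s - 1, by omega⟩
      simp [add_mul]
    omega
end
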